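/- Theorem (L∞ sampling error for multiple rank-1 lattices): Let f ∈ A^{α,β}(T^d) ∩ C(T^d) with β ≥ 0, α > -β, let T := -α/β (T := -∞ if β = 0), and let Λ be a multiple rank-1 lattice of L single rank-1 lattices fulfilling the reconstruction property for I = I_N^{d,T}, with approximated coefficients computed by the averaging algorithm. Then ‖f − S^Λ_{I_N^{d,T}} f‖_{L∞(T^d)} ≤ ‖f − S^Λ_{I_N^{d,T}} f‖_{A(T^d)} ≤ N^{-(α+β)}·(1+L)·‖f‖_{A^{α,β}(T^d)}. -/

import Mathlib

open scoped BigOperators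

/-- The weight `ω^{α,β}(k) = max(1,‖k‖₁)^α · ∏_s max(1,|k_s|)^β`. -/
noncomputable def wt (d : ℕ) (α β : ℝ) (k : Fin d → ℤ) : ℝ :=
  (max 1 (∑ s, |(k s : ℝ)|)) ^ α * ∏ s, (max 1 |(k s : ℝ)|) ^ β

open scoped Classical in
/-- Membership in `I_N^{d,T}` with `T = -α/β` (for `β = 0`: `T = -∞`, the `ℓ¹`-ball). -/
noncomputable def idxMem (d : ℕ) (α β N : ℝ) (k : Fin d → ℤ) : Prop :=
  if β = 0 then max 1 (∑ s, |(k s : ℝ)|) ≤ N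
  else (max 1 (∑ s, |(k s : ℝ)|)) ^ (α / β) * ∏ s, max 1 |(k s : ℝ)| ≤ N ^ (1 + α / β)

/-- `k ∈ I` is uniquely reconstructable w.r.t. the rank-1 lattice `Λ(z,M)` within `I`. -/
def uniqRec (d : ℕ) (I : Finset (Fin d → ℤ)) (z : Fin d → ℤ) (M : ℕ) (k : Fin d → ℤ) : Prop :=
  ∀ h ∈ I, h ≠ k → ¬ ((∑ s, k s * z s) ≡ (∑ s, h s * z s) [ZMOD (M : ℤ)])

open scoped Classical in
/-- `L_k`: the set of lattice indices `ℓ` for which `k` is uniquely reconstructable. -/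
noncomputable def Lset (d L : ℕ) (I : Finset (Fin d → ℤ)) (z : Fin L → Fin d → ℤ)
    (M : Fin L → ℕ) (k : Fin d → ℤ) : Finset (Fin L) :=
  Finset.univ.filter fun ℓ => uniqRec d I (z ℓ) (M ℓ) k

/-- The averaged approximated Fourier coefficient `f̂^Λ_k`. -/
noncomputable def coefML (d L : ℕ) (I : Finset (Fin d → ℤ)) (z : Fin L → Fin d → ℤ)
    (M : Fin L → ℕ) (fhat : (Fin d → ℤ) → ℂ) (k : Fin d → ℤ) : ℂ :=
  ((Lset d L I z M k).card : ℂ)⁻¹ *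
    ∑ ℓ ∈ Lset d L I z M k,
      ∑' h : {h : Fin d → ℤ // (∑ s, h s * (z ℓ) s) % ((M ℓ : ℤ)) = 0}, fhat (k + h.1)

lemma wt_nonneg (d : ℕ) (α β : ℝ) (k : Fin d → ℤ) : 0 ≤ wt d α β k := by
  unfold wt
  apply mul_nonneg (Real.rpow_nonneg (le_trans zero_le_one (le_max_left _ _)) _)
  exact Finset.prod_nonneg fun s _ => Real.rpow_nonneg (le_trans zero_le_one (le_max_left _ _)) _

lemma wt_lb (d : ℕ) (α β N : ℝ) (hβ : 0 ≤ β) (hα : α > -β) (hN : 1 ≤ N)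
    (k : Fin d → ℤ) (hk : ¬ idxMem d α β N k) : N ^ (α + β) ≤ wt d α β k := by
  classical
  set m : ℝ := max 1 (∑ s, |(k s : ℝ)|) with hm_def
  have hm1 : (1:ℝ) ≤ m := le_max_left _ _
  have hm0 : (0:ℝ) ≤ m := zero_le_one.trans hm1
  have hN0 : (0:ℝ) < N := lt_of_lt_of_le one_pos hN
  unfold idxMem at hk
  unfold wt
  rcases eq_or_lt_of_le hβ with hb0 | hb0
  · subst hb0
    rw [if_pos rfl, not_le] at hk
    have hα0 : 0 < α := by linarith [hα]
    have : N ^ α ≤ m ^ α := Real.rpow_le_rpow hN0.le hk.le hα0.le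
    simpa [Real.rpow_zero] using this
  · have hbne : β ≠ 0 := ne_of_gt hb0
    rw [if_neg hbne, not_le] at hk
    set P : ℝ := ∏ s, max 1 |(k s : ℝ)| with hP_def
    have hP1 : (1:ℝ) ≤ P := by
      rw [hP_def]
      calc (1:ℝ) = ∏ _s : Fin d, (1:ℝ) := Finset.prod_const_one.symm
        _ ≤ ∏ s, max 1 |(k s : ℝ)| :=
          Finset.prod_le_prod (fun _ _ => zero_le_one) (fun s _ => le_max_left _ _)
    have hP0 : (0:ℝ) ≤ P := zero_le_one.trans hP1
    have hstep : (N ^ (1 + α / β)) ^ β ≤ (m ^ (α / β) * P) ^ β :=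
      Real.rpow_le_rpow (Real.rpow_nonneg hN0.le _) hk.le hβ
    have hL : (N ^ (1 + α / β)) ^ β = N ^ (α + β) := by
      rw [← Real.rpow_mul hN0.le]
      congr 1
      field_simp
      ring
    have hR : (m ^ (α / β) * P) ^ β = m ^ α * ∏ s, (max 1 |(k s : ℝ)|) ^ β := by
      rw [Real.mul_rpow (Real.rpow_nonneg hm0 _) hP0, ← Real.rpow_mul hm0]
      rw [div_mul_cancel₀ _ hbne]
      congr 1
      rw [hP_def]
      exact (Real.finset_prod_rpow Finset.univ (fun s => max 1 |(k s : ℝ)|)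
        (fun s _ => zero_le_one.trans (le_max_left _ _)) β).symm
    rw [hL, hR] at hstep
    exact hstep


theorem stmt13 (d L : ℕ) (α β N : ℝ) (hβ : 0 ≤ β) (hα : α > -β) (hN : 1 ≤ N)
    (I : Finset (Fin d → ℤ)) (hI : ∀ k : Fin d → ℤ, k ∈ I ↔ idxMem d α β N k)
    (z : Fin L → Fin d → ℤ) (M : Fin L → ℕ) (hM : ∀ ℓ, 0 < M ℓ)
    (fhat : (Fin d → ℤ) → ℂ)
    (hsum : Summable fun k => ‖fhat k‖)
    (hA : Summable fun k => wt d α β k * ‖fhat k‖)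
    (hrec : ∀ k ∈ I, ∃ ℓ, uniqRec d I (z ℓ) (M ℓ) k) :
    (∀ x : Fin d → ℝ,
      ‖(∑' k : Fin d → ℤ, fhat k *
              Complex.exp (2 * (Real.pi : ℂ) * Complex.I * ∑ s, (k s : ℂ) * (x s : ℂ))) -
            ∑ k ∈ I, coefML d L I z M fhat k *
              Complex.exp (2 * (Real.pi : ℂ) * Complex.I * ∑ s, (k s : ℂ) * (x s : ℂ))‖
        ≤ (∑' k : {k : Fin d → ℤ // k ∉ I}, ‖fhat k.1‖) +
            ∑ k ∈ I, ‖fhat k - coefML d L I z M fhat k‖) ∧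
    ((∑' k : {k : Fin d → ℤ // k ∉ I}, ‖fhat k.1‖) +
        ∑ k ∈ I, ‖fhat k - coefML d L I z M fhat k‖
      ≤ N ^ (-(α + β)) * (1 + (L : ℝ)) *
          ∑' k : Fin d → ℤ, wt d α β k * ‖fhat k‖) := by
    classical
  have hE0 : ∀ k, 0 ≤ ‖fhat k‖ := fun k => norm_nonneg _
  have hsumN : Summable (fun k => ‖fhat k‖) := by
    simpa using hsum
  have hfs : Summable fhat := hsumN.of_norm
  -- summability over subtypes of shifted functions
  have hsubf : ∀ (k : Fin d → ℤ) (S : Set (Fin d → ℤ)),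
      Summable (fun h : ↥S => fhat (k + h.1)) := by
    intro k S
    exact (hfs.comp_injective (add_right_injective k)).subtype S
  have hsubE : ∀ (k : Fin d → ℤ) (S : Set (Fin d → ℤ)),
      Summable (fun h : ↥S => ‖fhat (k + h.1)‖) := by
    intro k S
    exact (hsum.comp_injective (add_right_injective k)).subtype S
  -- notation
  set Out : ℝ := ∑' k : {k : Fin d → ℤ // k ∉ I}, ‖fhat k.1‖ with hOut_def
  have hOutSummable : Summable (fun k : {k : Fin d → ℤ // k ∉ I} => ‖fhat k.1‖) :=
    hsum.subtype _
  have hOut0 : 0 ≤ Out := tsum_nonneg fun k => hE0 _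
  -- the "tail" sets for each lattice
  set Pset : Fin L → Set (Fin d → ℤ) :=
    fun ℓ => {h : Fin d → ℤ | (∑ s, h s * (z ℓ) s) % ((M ℓ : ℤ)) = 0} with hPset_def
  set D : (Fin d → ℤ) → Fin L → ℝ :=
    fun k ℓ => ∑' h : ↥(Pset ℓ \ {0}), ‖fhat (k + h.1)‖ with hD_def
  have hD0 : ∀ k ℓ, 0 ≤ D k ℓ := fun k ℓ => tsum_nonneg fun h => hE0 _
  -- splitting off the h = 0 term of the lattice sums
  have hT : ∀ (ℓ : Fin L) (k : Fin d → ℤ),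
      ‖fhat k -
        ∑' h : {h : Fin d → ℤ // (∑ s, h s * (z ℓ) s) % ((M ℓ : ℤ)) = 0}, fhat (k + h.1)‖
      ≤ D k ℓ := by
    intro ℓ k
    have h0 : (0 : Fin d → ℤ) ∈ Pset ℓ := by simp [hPset_def]
    have hEq : (∑' h : {h : Fin d → ℤ // (∑ s, h s * (z ℓ) s) % ((M ℓ : ℤ)) = 0}, fhat (k + h.1))
        = ∑' h : ↥(Pset ℓ), fhat (k + h.1) := rfl
    have hun : Pset ℓ = ({0} : Set (Fin d → ℤ)) ∪ (Pset ℓ \ {0}) :=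
      (Set.union_diff_cancel (Set.singleton_subset_iff.mpr h0)).symm
    have hsplit : (∑' h : ↥(Pset ℓ), fhat (k + h.1))
        = fhat k + ∑' h : ↥(Pset ℓ \ {0}), fhat (k + h.1) := by
      have hui := Summable.tsum_union_disjoint (f := fun b => fhat (k + b)) (s := ({0} : Set (Fin d → ℤ)))
        (t := Pset ℓ \ {0}) disjoint_sdiff_self_right (hsubf k _) (hsubf k _)
      rw [← hun] at hui
      rw [hui, tsum_singleton (0 : Fin d → ℤ) (fun b => fhat (k + b)), add_zero]
    rw [hEq, hsplit]
    have : fhat k - (fhat k + ∑' h : ↥(Pset ℓ \ {0}), fhat (k + h.1))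
        = -(∑' h : ↥(Pset ℓ \ {0}), fhat (k + h.1)) := by ring
    rw [this, norm_neg]
    calc ‖∑' h : ↥(Pset ℓ \ {0}), fhat (k + h.1)‖
        = ‖∑' h : ↥(Pset ℓ \ {0}), fhat (k + h.1)‖ := rfl
      _ ≤ ∑' h : ↥(Pset ℓ \ {0}), ‖fhat (k + h.1)‖ :=
          norm_tsum_le_tsum_norm (by simpa using hsubE k (Pset ℓ \ {0}))
      _ = D k ℓ := by simp [hD_def]
  -- STEP 1: coefficient error bounded by the D's
  have key1 : ∀ k ∈ I,
      ‖fhat k - coefML d L I z M fhat k‖ ≤ ∑ ℓ ∈ Lset d L I z M k, D k ℓ := by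
    intro k hk
    obtain ⟨ℓ₀, hℓ₀⟩ := hrec k hk
    have hcpos : 0 < (Lset d L I z M k).card :=
      Finset.card_pos.mpr ⟨ℓ₀, Finset.mem_filter.mpr ⟨Finset.mem_univ _, hℓ₀⟩⟩
    have hcne : ((Lset d L I z M k).card : ℂ) ≠ 0 := Nat.cast_ne_zero.mpr hcpos.ne'
    have hrw : fhat k - coefML d L I z M fhat k
        = ((Lset d L I z M k).card : ℂ)⁻¹ * ∑ ℓ ∈ Lset d L I z M k,
            (fhat k - ∑' h : {h : Fin d → ℤ //
              (∑ s, h s * (z ℓ) s) % ((M ℓ : ℤ)) = 0}, fhat (k + h.1)) := by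
      rw [coefML, Finset.sum_sub_distrib, Finset.sum_const, mul_sub, nsmul_eq_mul,
        ← mul_assoc, inv_mul_cancel₀ hcne, one_mul]
    rw [hrw, norm_mul, norm_inv, Complex.norm_natCast]
    have h1 : ‖∑ ℓ ∈ Lset d L I z M k,
        (fhat k - ∑' h : {h : Fin d → ℤ //
          (∑ s, h s * (z ℓ) s) % ((M ℓ : ℤ)) = 0}, fhat (k + h.1))‖
        ≤ ∑ ℓ ∈ Lset d L I z M k, D k ℓ :=
      (norm_sum_le _ _).trans (Finset.sum_le_sum fun ℓ _ => hT ℓ k)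
    have hc1 : (((Lset d L I z M k).card : ℝ))⁻¹ ≤ 1 := by
      apply inv_le_one_of_one_le₀
      exact_mod_cast hcpos
    calc (((Lset d L I z M k).card : ℝ))⁻¹ * ‖_‖
        ≤ 1 * ∑ ℓ ∈ Lset d L I z M k, D k ℓ :=
          mul_le_mul hc1 h1 (norm_nonneg _)  zero_le_one
      _ = ∑ ℓ ∈ Lset d L I z M k, D k ℓ := one_mul _
  -- STEP 2: per-lattice collective bound
  have key2 : ∀ ℓ : Fin L,
      ∑ k ∈ I.filter (fun k => uniqRec d I (z ℓ) (M ℓ) k), D k ℓ ≤ Out := by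
    intro ℓ
    set F := I.filter (fun k => uniqRec d I (z ℓ) (M ℓ) k) with hF
    set Mz : (Fin d → ℤ) → ℤ := fun k => (∑ s, k s * z ℓ s) % (M ℓ : ℤ) with hMz
    set G : (Fin d → ℤ) → {k' : Fin d → ℤ // k' ∉ I} → ℝ :=
      fun k k' => if Mz k'.1 = Mz k then ‖fhat k'.1‖ else 0 with hG
    have hG0 : ∀ k k', 0 ≤ G k k' := by
      intro k k'
      simp only [hG]
      split
      · exact hE0 _
      · exact le_refl 0
    have hGle : ∀ k k', G k k' ≤ ‖fhat k'.1‖ := by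
      intro k k'
      simp only [hG]
      split
      · exact le_refl _
      · exact hE0 _
    have hGsum : ∀ k, Summable (G k) := fun k =>
      Summable.of_nonneg_of_le (hG0 k) (hGle k) hOutSummable
    -- adding an aliasing shift does not change the residue
    have hres : ∀ (k h : Fin d → ℤ), h ∈ Pset ℓ → Mz (k + h) = Mz k := by
      intro k h hh
      have hh' : (∑ s, h s * z ℓ s) % (M ℓ : ℤ) = 0 := hh
      have hadd : ∑ s, (k + h) s * z ℓ s = (∑ s, k s * z ℓ s) + ∑ s, h s * z ℓ s := by
        rw [← Finset.sum_add_distrib]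
        refine Finset.sum_congr rfl fun s _ => ?_
        simp [add_mul]
      simp only [hMz]
      rw [hadd, Int.add_emod, hh', add_zero, Int.emod_emod_of_dvd _ dvd_rfl]
    -- at most one k ∈ F can have a given residue
    have huniq : ∀ (k' : {k' : Fin d → ℤ // k' ∉ I}), ∀ k₁ ∈ F, ∀ k₂ ∈ F,
        Mz k'.1 = Mz k₁ → Mz k'.1 = Mz k₂ → k₁ = k₂ := by
      intro k' k₁ h₁ k₂ h₂ e₁ e₂
      by_contra hne
      obtain ⟨hk₁I, hu₁⟩ := Finset.mem_filter.mp h₁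
      obtain ⟨hk₂I, _⟩ := Finset.mem_filter.mp h₂
      refine hu₁ k₂ hk₂I (fun hh => hne hh.symm) ?_
      show (∑ s, k₁ s * z ℓ s) % ((M ℓ : ℤ)) = (∑ s, k₂ s * z ℓ s) % ((M ℓ : ℤ))
      exact e₁.symm.trans e₂
    -- per-index bound via the injection h ↦ k + h
    have ha : ∀ k ∈ F, D k ℓ ≤ ∑' k', G k k' := by
      intro k hkF
      obtain ⟨hkI, hu⟩ := Finset.mem_filter.mp hkF
      have hnot : ∀ h : ↥(Pset ℓ \ {0}), k + h.1 ∉ I := by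
        intro h hmem
        obtain ⟨hP, hne0⟩ := h.2
        have hne : k + h.1 ≠ k := by
          intro e
          exact hne0 (by simpa using add_eq_left.mp e)
        refine hu (k + h.1) hmem hne ?_
        show (∑ s, k s * z ℓ s) % ((M ℓ : ℤ)) = (∑ s, (k + h.1) s * z ℓ s) % ((M ℓ : ℤ))
        exact (hres k h.1 hP).symm
      refine Summable.tsum_le_tsum_of_inj (fun h => ⟨k + h.1, hnot h⟩) ?_ (fun c _ => hG0 k c) ?_
        (hsubE k _) (hGsum k)
      · intro h₁ h₂ hh
        exact Subtype.ext (add_left_cancel (congrArg Subtype.val hh))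
      · intro h
        simp only [hG]
        rw [if_pos (hres k h.1 h.2.1)]
    -- pointwise bound after swapping the sums
    have hc : ∀ k' : {k' : Fin d → ℤ // k' ∉ I},
        ∑ k ∈ F, G k k' ≤ ‖fhat k'.1‖ := by
      intro k'
      have hsf : ∑ k ∈ F, G k k'
          = ∑ k ∈ F.filter (fun k => Mz k'.1 = Mz k), ‖fhat k'.1‖ := by
        have h1 : ∑ k ∈ F, G k k'
            = ∑ k ∈ F, (if Mz k'.1 = Mz k then ‖fhat k'.1‖ else 0) := rfl
        rw [h1]
        exact (Finset.sum_filter (fun k => Mz k'.1 = Mz k)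
          (fun _ => ‖fhat k'.1‖)).symm
      have hcard : (F.filter (fun k => Mz k'.1 = Mz k)).card ≤ 1 := by
        refine Finset.card_le_one.mpr fun a ha b hb => ?_
        obtain ⟨haF, hae⟩ := Finset.mem_filter.mp ha
        obtain ⟨hbF, hbe⟩ := Finset.mem_filter.mp hb
        exact huniq k' a haF b hbF hae hbe
      rw [hsf, Finset.sum_const, nsmul_eq_mul]
      calc ((F.filter (fun k => Mz k'.1 = Mz k)).card : ℝ) * ‖fhat k'.1‖
          ≤ 1 * ‖fhat k'.1‖ := by
            refine mul_le_mul_of_nonneg_right ?_ (hE0 _)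
            exact_mod_cast hcard
        _ = ‖fhat k'.1‖ := one_mul _
    calc ∑ k ∈ F, D k ℓ ≤ ∑ k ∈ F, ∑' k', G k k' := Finset.sum_le_sum ha
      _ = ∑' k', ∑ k ∈ F, G k k' := (Summable.tsum_finsetSum (fun k _ => hGsum k)).symm
      _ ≤ Out := Summable.tsum_le_tsum hc (summable_sum fun k _ => hGsum k) hOutSummable
  -- STEP 3: combine to get the L·Out bound
  have hIsum : ∑ k ∈ I, ‖fhat k - coefML d L I z M fhat k‖ ≤ (L : ℝ) * Out := by
    calc ∑ k ∈ I, ‖fhat k - coefML d L I z M fhat k‖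
        ≤ ∑ k ∈ I, ∑ ℓ ∈ Lset d L I z M k, D k ℓ := Finset.sum_le_sum key1
      _ = ∑ k ∈ I, ∑ ℓ ∈ (Finset.univ : Finset (Fin L)),
            if uniqRec d I (z ℓ) (M ℓ) k then D k ℓ else 0 := by
          refine Finset.sum_congr rfl fun k _ => ?_
          rw [Lset, Finset.sum_filter]
      _ = ∑ ℓ ∈ (Finset.univ : Finset (Fin L)), ∑ k ∈ I,
            if uniqRec d I (z ℓ) (M ℓ) k then D k ℓ else 0 := Finset.sum_comm
      _ = ∑ ℓ ∈ (Finset.univ : Finset (Fin L)),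
            ∑ k ∈ I.filter (fun k => uniqRec d I (z ℓ) (M ℓ) k), D k ℓ := by
          refine Finset.sum_congr rfl fun ℓ _ => ?_
          rw [Finset.sum_filter]
      _ ≤ ∑ _ℓ ∈ (Finset.univ : Finset (Fin L)), Out := Finset.sum_le_sum fun ℓ _ => key2 ℓ
      _ = (L : ℝ) * Out := by simp [mul_comm]
  -- STEP 4: Out is bounded using the weights
  have hOutW : Out ≤ N ^ (-(α + β)) * ∑' k : Fin d → ℤ, wt d α β k * ‖fhat k‖ := by
    have hN0 : (0:ℝ) < N := lt_of_lt_of_le one_pos hN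
    have hNneg : (0:ℝ) ≤ N ^ (-(α + β)) := (Real.rpow_pos_of_pos hN0 _).le
    have hws : Summable (fun k : {k : Fin d → ℤ // k ∉ I} =>
        N ^ (-(α + β)) * (wt d α β k.1 * ‖fhat k.1‖)) :=
      (hA.subtype _).mul_left _
    have hpt : ∀ k : {k : Fin d → ℤ // k ∉ I},
        ‖fhat k.1‖ ≤ N ^ (-(α + β)) * (wt d α β k.1 * ‖fhat k.1‖) := by
      intro k
      have hwb : N ^ (α + β) ≤ wt d α β k.1 :=
        wt_lb d α β N hβ hα hN k.1 (fun hidx => k.2 ((hI k.1).mpr hidx))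
      have h1 : (1:ℝ) ≤ N ^ (-(α + β)) * wt d α β k.1 := by
        calc (1:ℝ) = N ^ (-(α + β)) * N ^ (α + β) := by
              rw [← Real.rpow_add hN0, neg_add_cancel, Real.rpow_zero]
          _ ≤ N ^ (-(α + β)) * wt d α β k.1 := mul_le_mul_of_nonneg_left hwb hNneg
      calc ‖fhat k.1‖ = 1 * ‖fhat k.1‖ := (one_mul _).symm
        _ ≤ (N ^ (-(α + β)) * wt d α β k.1) * ‖fhat k.1‖ :=
            mul_le_mul_of_nonneg_right h1 (hE0 _)
        _ = N ^ (-(α + β)) * (wt d α β k.1 * ‖fhat k.1‖) := by ring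
    calc Out ≤ ∑' k : {k : Fin d → ℤ // k ∉ I},
          N ^ (-(α + β)) * (wt d α β k.1 * ‖fhat k.1‖) :=
        Summable.tsum_le_tsum hpt hOutSummable hws
      _ = N ^ (-(α + β)) * ∑' k : {k : Fin d → ℤ // k ∉ I},
          (wt d α β k.1 * ‖fhat k.1‖) := tsum_mul_left
      _ ≤ N ^ (-(α + β)) * ∑' k : Fin d → ℤ, wt d α β k * ‖fhat k‖ := by
        refine mul_le_mul_of_nonneg_left ?_ hNneg
        exact Summable.tsum_subtype_le (fun k => wt d α β k * ‖fhat k‖) _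
          (fun k => mul_nonneg (wt_nonneg _ _ _ _) (hE0 _)) hA
  constructor
  · -- part 1 : pointwise bound
    intro x
    set e : (Fin d → ℤ) → ℂ := fun k =>
      Complex.exp (2 * (Real.pi : ℂ) * Complex.I * ∑ s, (k s : ℂ) * (x s : ℂ)) with he
    have habs : ∀ k, ‖e k‖ = 1 := by
      intro k
      have hco : (∑ s, ((k s : ℂ)) * ((x s : ℂ))) = ((∑ s, ((k s : ℤ) : ℝ) * x s : ℝ) : ℂ) := by
        push_cast
        ring
      simp only [he]
      rw [hco, Complex.norm_exp]
      norm_num [Complex.mul_re, Complex.mul_im]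
    have hnormg : ∀ k, ‖fhat k * e k‖ = ‖fhat k‖ := by
      intro k
      rw [norm_mul, habs, mul_one]
    have hg : Summable (fun k => fhat k * e k) := by
      apply Summable.of_norm
      simpa only [hnormg] using hsum
    have hsplit := Summable.sum_add_tsum_compl (s := I) hg
    rw [← hsplit]
    have hre : ((∑ k ∈ I, fhat k * e k) + ∑' k : ↥((I : Set (Fin d → ℤ))ᶜ), fhat k.1 * e k.1)
        - ∑ k ∈ I, coefML d L I z M fhat k * e k
        = (∑' k : ↥((I : Set (Fin d → ℤ))ᶜ), fhat k.1 * e k.1)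
          + ∑ k ∈ I, (fhat k - coefML d L I z M fhat k) * e k := by
      have : ∑ k ∈ I, (fhat k - coefML d L I z M fhat k) * e k
          = (∑ k ∈ I, fhat k * e k) - ∑ k ∈ I, coefML d L I z M fhat k * e k := by
        rw [← Finset.sum_sub_distrib]
        exact Finset.sum_congr rfl fun k _ => sub_mul _ _ _
      rw [this]
      ring
    rw [hre]
    have hb1 : ‖∑' k : ↥((I : Set (Fin d → ℤ))ᶜ), fhat k.1 * e k.1‖ ≤ Out := by
      have hsc : Summable (fun k : ↥((I : Set (Fin d → ℤ))ᶜ) => ‖fhat k.1 * e k.1‖) := by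
        refine Summable.congr (hsum.subtype ((I : Set (Fin d → ℤ))ᶜ)) ?_
        intro k
        exact (hnormg k.1).symm
      calc ‖∑' k : ↥((I : Set (Fin d → ℤ))ᶜ), fhat k.1 * e k.1‖
          = ‖∑' k : ↥((I : Set (Fin d → ℤ))ᶜ), fhat k.1 * e k.1‖ := rfl
        _ ≤ ∑' k : ↥((I : Set (Fin d → ℤ))ᶜ), ‖fhat k.1 * e k.1‖ := norm_tsum_le_tsum_norm hsc
        _ = ∑' k : ↥((I : Set (Fin d → ℤ))ᶜ), ‖fhat k.1‖ :=
            tsum_congr fun k => hnormg k.1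
        _ = Out := rfl
    have hb2 : ‖∑ k ∈ I, (fhat k - coefML d L I z M fhat k) * e k‖
        ≤ ∑ k ∈ I, ‖fhat k - coefML d L I z M fhat k‖ := by
      refine (norm_sum_le _ _).trans ?_
      refine Finset.sum_le_sum fun k _ => ?_
      rw [norm_mul, habs, mul_one]
    calc ‖(∑' k : ↥((I : Set (Fin d → ℤ))ᶜ), fhat k.1 * e k.1)
          + ∑ k ∈ I, (fhat k - coefML d L I z M fhat k) * e k‖
        ≤ ‖∑' k : ↥((I : Set (Fin d → ℤ))ᶜ), fhat k.1 * e k.1‖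
          + ‖∑ k ∈ I, (fhat k - coefML d L I z M fhat k) * e k‖ :=
          norm_add_le _ _
      _ ≤ Out + ∑ k ∈ I, ‖fhat k - coefML d L I z M fhat k‖ :=
          add_le_add hb1 hb2
  · -- part 2
    have hS0 : 0 ≤ ∑' k : Fin d → ℤ, wt d α β k * ‖fhat k‖ :=
      tsum_nonneg fun k => mul_nonneg (wt_nonneg _ _ _ _) (hE0 _)
    have h1L : (0:ℝ) ≤ 1 + (L:ℝ) := by positivity
    calc Out + ∑ k ∈ I, ‖fhat k - coefML d L I z M fhat k‖
        ≤ Out + (L : ℝ) * Out := by linarith [hIsum]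
      _ = (1 + (L:ℝ)) * Out := by ring
      _ ≤ (1 + (L:ℝ)) * (N ^ (-(α + β)) * ∑' k : Fin d → ℤ, wt d α β k * ‖fhat k‖) :=
          mul_le_mul_of_nonneg_left hOutW h1L
      _ = N ^ (-(α + β)) * (1 + (L : ℝ)) *
            ∑' k : Fin d → ℤ, wt d α β k * ‖fhat k‖ := by ring
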